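/- Let V = (F_2)^n, ρ a permutation of V with 0ρ = 0, and ρ̄ the Feistel operator on V × V. Suppose 𝒰₁ = {(a, φ₁(a)) : a ∈ A₁} and 𝒰₂ = {(a, φ₂(a)) : a ∈ A₂} are subgroups of V × V (Goursat form with D₁ = D₂ = {0}) such that 𝒰₁ρ̄ = 𝒰₂. Then ρ restricted to A₂ is additive: there is a group homomorphism agreeing with ρ on A₂; explicitly, φ₁ is injective with image A₂ and ρ(a) = φ₂(a) + φ₁⁻¹(a) for all a ∈ A₂. -/

import Mathlib

abbrev Vn (n : ℕ) := Fin n → ZMod 2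

/-- The Feistel operator `(x₁, x₂) ↦ (x₂, x₁ + ρ x₂)` on `V × V`. -/
def feistel {n : ℕ} (ρ : Equiv.Perm (Vn n)) : Vn n × Vn n → Vn n × Vn n :=
  fun x => (x.2, x.1 + ρ x.2)

/-- If a Feistel operator maps the graph subgroup `𝒰₁ = {(a, φ₁ a) : a ∈ A₁}`
onto `𝒰₂ = {(a, φ₂ a) : a ∈ A₂}` (Goursat form with `D₁ = D₂ = 0`), then `φ₁`
is injective with image `A₂`, and `ρ a = φ₂ a + φ₁⁻¹ a` for all `a ∈ A₂`;
in particular `ρ` is additive on `A₂`. -/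
theorem stmt_10 (n : ℕ) (ρ : Equiv.Perm (Vn n)) (hρ : ρ 0 = 0)
    (A₁ A₂ : AddSubgroup (Vn n))
    (φ₁ : A₁ →+ Vn n) (φ₂ : A₂ →+ Vn n)
    (h : feistel ρ '' {p | ∃ a : A₁, p = ((a : Vn n), φ₁ a)} =
      {p | ∃ a : A₂, p = ((a : Vn n), φ₂ a)}) :
    Function.Injective φ₁ ∧
    (Set.range fun a : A₁ => φ₁ a) = (A₂ : Set (Vn n)) ∧
    (∀ (a : A₂) (b : A₁), φ₁ b = (a : Vn n) → ρ (a : Vn n) = φ₂ a + (b : Vn n)) := by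
  -- forward direction: for each b : A₁, (φ₁ b, b + ρ (φ₁ b)) ∈ 𝒰₂
  have fwd : ∀ b : A₁, ∃ a : A₂, (a : Vn n) = φ₁ b ∧ φ₂ a = (b : Vn n) + ρ (φ₁ b) := by
    intro b
    have hm : feistel ρ ((b : Vn n), φ₁ b) ∈
        {p : Vn n × Vn n | ∃ a : A₂, p = ((a : Vn n), φ₂ a)} := by
      rw [← h]
      exact ⟨((b : Vn n), φ₁ b), ⟨b, rfl⟩, rfl⟩
    obtain ⟨a, ha⟩ := hm
    simp only [feistel, Prod.mk.injEq] at ha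
    exact ⟨a, ha.1.symm, ha.2.symm⟩
  -- backward direction
  have bwd : ∀ a : A₂, ∃ b : A₁, φ₁ b = (a : Vn n) ∧ (b : Vn n) + ρ (φ₁ b) = φ₂ a := by
    intro a
    have hm : ((a : Vn n), φ₂ a) ∈ feistel ρ '' {p | ∃ b : A₁, p = ((b : Vn n), φ₁ b)} := by
      rw [h]; exact ⟨a, rfl⟩
    obtain ⟨p, ⟨b, hb⟩, hp⟩ := hm
    subst hb
    simp only [feistel, Prod.mk.injEq] at hp
    exact ⟨b, hp.1, hp.2⟩
  have hinj : Function.Injective φ₁ := by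
    intro b₁ b₂ hb
    suffices h0 : ∀ c : A₁, φ₁ c = 0 → c = 0 by
      have := h0 (b₁ - b₂) (by simp [hb])
      rwa [sub_eq_zero] at this
    intro c hc
    obtain ⟨a, ha1, ha2⟩ := fwd c
    have ha0 : a = 0 := by ext; rw [ha1, hc]; rfl
    rw [hc, hρ, add_zero] at ha2
    rw [ha0, map_zero] at ha2
    ext
    rw [← ha2]; rfl
  refine ⟨hinj, ?_, ?_⟩
  · ext x
    constructor
    · rintro ⟨b, rfl⟩
      obtain ⟨a, ha1, _⟩ := fwd b
      show φ₁ b ∈ (A₂ : Set (Vn n))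
      rw [← ha1]; exact a.2
    · intro hx
      obtain ⟨b, hb1, _⟩ := bwd ⟨x, hx⟩
      exact ⟨b, hb1⟩
  · intro a b hb
    obtain ⟨a', ha1, ha2⟩ := fwd b
    have haa : a' = a := by ext; rw [ha1, hb]
    rw [haa, hb] at ha2
    -- ha2 : φ₂ a = b + ρ a
    rw [ha2]
    abel_nf
    rw [show (2 : ℤ) • (b : Vn n) = (b : Vn n) + (b : Vn n) from two_smul ℤ _]
    have : (b : Vn n) + (b : Vn n) = 0 := by
      ext i
      exact (CharTwo.add_self_eq_zero _)
    rw [this, zero_add]
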